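/- arXiv:2309.14028 — 3 statements merged into one kernel-verified Lean document; each statement's English description precedes it below -/
import Mathlib

section
/- Fix t linearly independent over F_q elements constraint: if (e_1, ..., e_t) is uniform over all t-tuples of F_q-linearly independent elements of F_{q^m}, and (a_1, ..., a_t) is a fixed tuple of elements of F_{q^m}, not all zero, such that NOT all ratios a_j/a_i (for some fixed i with a_i ≠ 0) lie in F_q, then the probability that ∑_{j=1}^t a_j e_j = 0 is at most 1/(q^m − q^{t−1}). -/
/-- If `(e_1, …, e_t)` is uniform over all `t`-tuples of `F_q`-linearly independent
elements of `F_{q^m}`, and `(a_1, …, a_t)` is a fixed tuple of elements of `F_{q^m}`,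
not all zero, such that there is NO index `i` with `a_i ≠ 0` and scalars `λ_j ∈ F_q` with
`a_j = λ_j a_i` for all `j ≠ i`, then the probability that `∑ a_j e_j = 0` is at most
`1/(q^m − q^{t−1})`. -/
theorem stmt_6 (F K : Type) [Field F] [Fintype F] [Field K] [Fintype K] [Algebra F K]
    (q m t : ℕ) (hq : q = Fintype.card F) (hm : m = Module.finrank F K) (htm : t ≤ m)
    (a : Fin t → K) (ha : a ≠ 0)
    (hdeg : ¬ ∃ i : Fin t, a i ≠ 0 ∧ ∀ j : Fin t, j ≠ i →
        ∃ lam : F, a j = algebraMap F K lam * a i) :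
    (Nat.card {e : Fin t → K // LinearIndependent F e ∧ ∑ j, a j * e j = 0} : ℝ) /
        (Nat.card {e : Fin t → K // LinearIndependent F e} : ℝ) ≤
      1 / ((q : ℝ) ^ m - (q : ℝ) ^ (t - 1)) := by
  subst hq hm
  -- choose i with a i ≠ 0
  obtain ⟨i, hi⟩ : ∃ i, a i ≠ 0 := by
    by_contra h
    push_neg at h
    exact ha (funext fun j => h j)
  -- t = n + 1
  obtain ⟨n, rfl⟩ : ∃ n, t = n + 1 := ⟨t - 1, (Nat.succ_pred_eq_of_pos i.pos).symm⟩
  simp only [Nat.add_sub_cancel]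
  set q := Fintype.card F
  set m := Module.finrank F K
  have hq2 : 1 < q := Fintype.one_lt_card
  -- counts
  have hN : Nat.card {e : Fin (n+1) → K // LinearIndependent F e} =
      ∏ j : Fin (n+1), (q ^ m - q ^ j.val) := card_linearIndependent htm
  have hM : Nat.card {e : Fin n → K // LinearIndependent F e} =
      ∏ j : Fin n, (q ^ m - q ^ j.val) := card_linearIndependent (le_trans (Nat.le_succ n) htm)
  -- injection: drop coordinate i
  have hle : Nat.card {e : Fin (n+1) → K // LinearIndependent F e ∧ ∑ j, a j * e j = 0}
      ≤ Nat.card {e : Fin n → K // LinearIndependent F e} := by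
    apply Nat.card_le_card_of_injective
      (fun e => ⟨(e : Fin (n+1) → K) ∘ i.succAbove, e.2.1.comp _ i.succAbove_right_injective⟩)
    rintro ⟨e, he, hesum⟩ ⟨f, hf, hfsum⟩ hef
    simp only [Subtype.mk.injEq] at hef ⊢
    have hcomp : ∀ k : Fin n, e (i.succAbove k) = f (i.succAbove k) :=
      fun k => congrFun hef k
    have hei : a i * e i = a i * f i := by
      rw [Fin.sum_univ_succAbove _ i] at hesum hfsum
      have : ∑ k : Fin n, a (i.succAbove k) * e (i.succAbove k)
          = ∑ k : Fin n, a (i.succAbove k) * f (i.succAbove k) := by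
        refine Finset.sum_congr rfl fun k _ => by rw [hcomp k]
      linear_combination hesum - hfsum - this
    have hei' : e i = f i := mul_left_cancel₀ hi hei
    funext j
    rcases eq_or_ne j i with rfl | hj
    · exact hei'
    · obtain ⟨k, hk⟩ := Fin.exists_succAbove_eq hj
      rw [← hk]
      exact hcomp k
  -- positivity of factors
  have hfac : ∀ j : ℕ, j < m → 0 < q ^ m - q ^ j := fun j hj =>
    Nat.sub_pos_of_lt (Nat.pow_lt_pow_right hq2 hj)
  have hMpos : 0 < (∏ j : Fin n, (q ^ m - q ^ j.val)) :=
    Finset.prod_pos fun j _ => hfac j (lt_of_lt_of_le (j.2.trans (Nat.lt_succ_self n)) htm)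
  have hlast : 0 < q ^ m - q ^ n := hfac n (lt_of_lt_of_le (Nat.lt_succ_self n) htm)
  have hNsplit : (∏ j : Fin (n+1), (q ^ m - q ^ j.val)) =
      (∏ j : Fin n, (q ^ m - q ^ j.val)) * (q ^ m - q ^ n) := by
    rw [Fin.prod_univ_castSucc]
    rfl
  -- real casts
  have hcast : ((q ^ m - q ^ n : ℕ) : ℝ) = (q : ℝ) ^ m - (q : ℝ) ^ n := by
    push_cast [Nat.cast_sub (Nat.pow_le_pow_right (le_of_lt hq2) (le_trans (Nat.le_succ n) htm))]
    ring
  rw [hN, hNsplit]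
  set M := ∏ j : Fin n, (q ^ m - q ^ j.val) with hMdef
  rw [hM] at hle
  have hMpos' : (0:ℝ) < M := by exact_mod_cast hMpos
  have hlast' : (0:ℝ) < (q:ℝ) ^ m - (q:ℝ) ^ n := by
    rw [← hcast]
    exact_mod_cast hlast
  calc (Nat.card {e : Fin (n+1) → K // LinearIndependent F e ∧ ∑ j, a j * e j = 0} : ℝ)
        / ((M * (q ^ m - q ^ n) : ℕ) : ℝ)
      ≤ (M : ℝ) / ((M * (q ^ m - q ^ n) : ℕ) : ℝ) := by
        gcongr ?_ / _
        exact_mod_cast hle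
    _ = 1 / ((q : ℝ) ^ m - (q : ℝ) ^ n) := by
        push_cast [hcast]
        rw [div_mul_eq_div_div_swap]
        rw [div_right_comm, div_self (ne_of_gt hMpos')]
end

section
/- Define T(q, t, w) = 1 − ∏_{i=0}^{tw−1} (1 − q^{i−(n−k)}). If t·w·q^{−(n−k)+tw} ≤ 1, then 0 ≤ q^{−(n−k)+tw}/(q−1) − T(q,t,w) ≤ q^{−(n−k)}/(q−1) + (1/(q+1))·(q^{−(n−k)+tw}/(q−1))². -/
open Finset

private lemma aux_prod (x : ℕ → ℝ) (m : ℕ) (hx0 : ∀ i < m, 0 ≤ x i)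
    (hx1 : ∀ i < m, x i ≤ 1) :
    1 - ∑ i ∈ range m, x i ≤ ∏ i ∈ range m, (1 - x i) ∧
    ∏ i ∈ range m, (1 - x i) ≤
      1 - ∑ i ∈ range m, x i + ∑ i ∈ range m, x i * ∑ j ∈ range i, x j ∧
    0 ≤ ∑ i ∈ range m, x i * ∑ j ∈ range i, x j := by
  induction m with
  | zero => simp
  | succ m ih =>
    obtain ⟨h1, h2, h3⟩ := ih (fun i hi => hx0 i (hi.trans (Nat.lt_succ_self m)))
      (fun i hi => hx1 i (hi.trans (Nat.lt_succ_self m)))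
    have hxm0 : 0 ≤ x m := hx0 m (Nat.lt_succ_self m)
    have hxm1 : x m ≤ 1 := hx1 m (Nat.lt_succ_self m)
    have hS0 : 0 ≤ ∑ i ∈ range m, x i :=
      Finset.sum_nonneg fun i hi => hx0 i ((mem_range.mp hi).trans (Nat.lt_succ_self m))
    rw [Finset.prod_range_succ, Finset.sum_range_succ,
      Finset.sum_range_succ (fun i => x i * ∑ j ∈ range i, x j)]
    have key1 := mul_le_mul_of_nonneg_right h1 (by linarith : (0:ℝ) ≤ 1 - x m)
    have key2 := mul_le_mul_of_nonneg_right h2 (by linarith : (0:ℝ) ≤ 1 - x m)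
    refine ⟨?_, ?_, ?_⟩
    · nlinarith [mul_nonneg hS0 hxm0]
    · nlinarith [mul_nonneg h3 hxm0]
    · nlinarith [mul_nonneg hxm0 hS0]

private lemma aux_geo (q : ℝ) (hq : 2 ≤ q) (m : ℕ) :
    ∑ i ∈ range m, q ^ i * ∑ j ∈ range i, q ^ j ≤
      q ^ (2 * m) / ((q - 1) ^ 2 * (q + 1)) := by
  have hq1 : q - 1 ≥ 1 := by linarith
  have hD : (0:ℝ) < (q - 1) ^ 2 * (q + 1) := by positivity
  induction m with
  | zero => simp; positivity
  | succ m ih =>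
    rw [Finset.sum_range_succ, geom_sum_eq (by linarith : q ≠ 1)]
    have hpm : (1:ℝ) ≤ q ^ m := one_le_pow₀ (by linarith)
    have key : q ^ m * ((q ^ m - 1) / (q - 1)) ≤
        (q ^ (2 * m) * q ^ 2 - q ^ (2 * m)) / ((q - 1) ^ 2 * (q + 1)) := by
      rw [← mul_div_assoc, div_le_div_iff₀ (by linarith) hD]
      have h2m : q ^ (2 * m) = q ^ m * q ^ m := by rw [two_mul, pow_add]
      nlinarith [pow_nonneg (by linarith : (0:ℝ) ≤ q) m]
    have h2 : q ^ (2 * (m + 1)) = q ^ (2 * m) * q ^ 2 := by ring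
    rw [h2]
    have : (q ^ (2 * m) * q ^ 2) / ((q - 1) ^ 2 * (q + 1)) =
        q ^ (2 * m) / ((q - 1) ^ 2 * (q + 1)) +
        (q ^ (2 * m) * q ^ 2 - q ^ (2 * m)) / ((q - 1) ^ 2 * (q + 1)) := by
      field_simp
      ring
    rw [this]
    linarith

/-- Let `T(q,t,w) = 1 − ∏_{i=0}^{tw−1} (1 − q^{i−(n−k)})`. Under the condition
`t·w·q^{−(n−k)+tw} ≤ 1`, we have
`0 ≤ q^{−(n−k)+tw}/(q−1) − T ≤ q^{−(n−k)}/(q−1) + (1/(q+1))·(q^{−(n−k)+tw}/(q−1))²`. -/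
theorem stmt_10 (q : ℝ) (hq : 2 ≤ q) (t w n k : ℕ) (hkn : k < n) (htw : t * w ≤ n - k)
    (hcond : (t * w : ℝ) * (q ^ (t * w) / q ^ (n - k)) ≤ 1) :
    0 ≤ q ^ (t * w) / q ^ (n - k) / (q - 1) -
        (1 - ∏ i ∈ Finset.range (t * w), (1 - q ^ i / q ^ (n - k))) ∧
      q ^ (t * w) / q ^ (n - k) / (q - 1) -
          (1 - ∏ i ∈ Finset.range (t * w), (1 - q ^ i / q ^ (n - k))) ≤
        (1 / q ^ (n - k)) / (q - 1) +
          (1 / (q + 1)) * (q ^ (t * w) / q ^ (n - k) / (q - 1)) ^ 2 := by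
  set m := t * w with hm
  set N := n - k with hN
  have hq0 : (0:ℝ) < q := by linarith
  have hqN : (0:ℝ) < q ^ N := by positivity
  have hx0 : ∀ i < m, (0:ℝ) ≤ q ^ i / q ^ N := fun i _ => by positivity
  have hx1 : ∀ i < m, q ^ i / q ^ N ≤ 1 := by
    intro i hi
    rw [div_le_one hqN]
    exact pow_le_pow_right₀ (by linarith) (le_of_lt (lt_of_lt_of_le hi htw))
  obtain ⟨h1, h2, _⟩ := aux_prod (fun i => q ^ i / q ^ N) m hx0 hx1
  -- sum formula
  have hS : ∑ i ∈ range m, q ^ i / q ^ N = (q ^ m - 1) / (q - 1) / q ^ N := by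
    rw [← Finset.sum_div, geom_sum_eq (by linarith : q ≠ 1)]
  -- error term formula
  have hE : ∑ i ∈ range m, (q ^ i / q ^ N) * ∑ j ∈ range i, q ^ j / q ^ N =
      (∑ i ∈ range m, q ^ i * ∑ j ∈ range i, q ^ j) / (q ^ N) ^ 2 := by
    rw [Finset.sum_div]
    refine Finset.sum_congr rfl fun i _ => ?_
    rw [← Finset.sum_div, div_mul_div_comm, sq]
  have hgeo := aux_geo q hq m
  have hEle : ∑ i ∈ range m, (q ^ i / q ^ N) * ∑ j ∈ range i, q ^ j / q ^ N ≤
      (1 / (q + 1)) * (q ^ m / q ^ N / (q - 1)) ^ 2 := by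
    rw [hE]
    have h1' : (1 / (q + 1)) * (q ^ m / q ^ N / (q - 1)) ^ 2 =
        (q ^ (2 * m) / ((q - 1) ^ 2 * (q + 1))) / (q ^ N) ^ 2 := by
      rw [two_mul, pow_add]
      field_simp
    rw [h1']
    exact div_le_div_of_nonneg_right hgeo (by positivity) |>.trans (le_refl _)
  have hAB : q ^ m / q ^ N / (q - 1) - (q ^ m - 1) / (q - 1) / q ^ N =
      (1 / q ^ N) / (q - 1) := by
    field_simp
    ring
  constructor
  · have : 1 - ∏ i ∈ range m, (1 - q ^ i / q ^ N) ≤ ∑ i ∈ range m, q ^ i / q ^ N := by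
      linarith
    rw [hS] at this
    linarith [hAB, div_nonneg (by positivity : (0:ℝ) ≤ 1 / q ^ N) (by linarith : (0:ℝ) ≤ q - 1)]
  · have h2' : 1 - ∏ i ∈ range m, (1 - q ^ i / q ^ N) ≥
        (∑ i ∈ range m, q ^ i / q ^ N) -
        ∑ i ∈ range m, (q ^ i / q ^ N) * ∑ j ∈ range i, q ^ j / q ^ N := by
      linarith
    rw [hS] at h2'
    linarith
end

section
/- Expand 1 − ∏_{i=0}^{N−1}(1 − q^{i−s}) = ∑_{i=1}^{N} (−1)^{i+1} u_i where u_i = ∑ over i-element subsets {k_1,...,k_i} of {0,...,N−1} of q^{(k_1+...+k_i) − i·s}. If N·q^{−s+N} ≤ 1 then the sequence (u_i) is decreasing: u_{i+1} ≤ u_i for all 1 ≤ i ≤ N−1. -/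
/-- Expansion `1 − ∏_{i=0}^{N−1}(1 − q^{i−s}) = ∑_{i=1}^{N} (−1)^{i+1} u_i` where
`u_i` is the `i`-th elementary symmetric sum of the quantities `q^{k−s}`, `k = 0,…,N−1`;
moreover if `N·q^{−s+N} ≤ 1` then the sequence `(u_i)` is decreasing on `1 ≤ i ≤ N−1`. -/
theorem stmt_11 (q : ℝ) (hq : 2 ≤ q) (N s : ℕ) (hN : 1 ≤ N) (hs : N ≤ s)
    (u : ℕ → ℝ)
    (hu : ∀ i, u i = ∑ S ∈ (Finset.range N).powersetCard i,
        (∏ kk ∈ S, q ^ kk) / q ^ (i * s))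
    (hcond : (N : ℝ) * (q ^ N / q ^ s) ≤ 1) :
    (1 - ∏ i ∈ Finset.range N, (1 - q ^ i / q ^ s)) =
        ∑ i ∈ Finset.Icc 1 N, (-1 : ℝ) ^ (i + 1) * u i ∧
      ∀ i, 1 ≤ i → i ≤ N - 1 → u (i + 1) ≤ u i := by
  have hq0 : (0:ℝ) < q := lt_of_lt_of_le two_pos hq
  have hq1 : (1:ℝ) ≤ q := le_trans one_le_two hq
  set x : ℕ → ℝ := fun k => q ^ k / q ^ s with hx
  have hxnn : ∀ k, 0 ≤ x k := fun k => div_nonneg (pow_nonneg hq0.le k) (pow_nonneg hq0.le s)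
  have hsupmem : ∀ S : Finset ℕ, S.Nonempty → S.sup id ∈ S := by
    intro S h
    rw [← Finset.sup'_eq_sup h id, ← Finset.max'_eq_sup']
    exact S.max'_mem h
  -- u in terms of x
  have hux : ∀ j, u j = ∑ S ∈ (Finset.range N).powersetCard j, ∏ k ∈ S, x k := by
    intro j
    rw [hu]
    refine Finset.sum_congr rfl fun S hS => ?_
    have hcard : S.card = j := (Finset.mem_powersetCard.mp hS).2
    simp only [hx, Finset.prod_div_distrib, Finset.prod_const, hcard, ← pow_mul, mul_comm j s]
  constructor
  · -- expansion
    have key : ∏ i ∈ Finset.range N, (1 - x i)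
        = ∑ t ∈ (Finset.range N).powerset, (-1 : ℝ) ^ t.card * ∏ k ∈ t, x k := by
      have := Finset.prod_add (fun k => -x k) (fun _ => (1:ℝ)) (Finset.range N)
      simp only [Finset.prod_const_one, mul_one] at this
      calc ∏ i ∈ Finset.range N, (1 - x i) = ∏ i ∈ Finset.range N, (-x i + 1) := by
            refine Finset.prod_congr rfl fun i _ => by ring
        _ = ∑ t ∈ (Finset.range N).powerset, ∏ k ∈ t, (-x k) := this
        _ = ∑ t ∈ (Finset.range N).powerset, (-1 : ℝ) ^ t.card * ∏ k ∈ t, x k := by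
            refine Finset.sum_congr rfl fun t _ => ?_
            rw [← Finset.prod_const (-1 : ℝ), ← Finset.prod_mul_distrib]
            exact Finset.prod_congr rfl fun k _ => by ring
    rw [key, Finset.sum_powerset]
    have hterm : ∀ j, (∑ t ∈ Finset.powersetCard j (Finset.range N),
        (-1 : ℝ) ^ t.card * ∏ k ∈ t, x k) = (-1 : ℝ) ^ j * u j := by
      intro j
      rw [hux j, Finset.mul_sum]
      refine Finset.sum_congr rfl fun t ht => ?_
      rw [(Finset.mem_powersetCard.mp ht).2]
    simp only [hterm]
    have hu0 : u 0 = 1 := by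
      rw [hux 0]; simp
    rw [Finset.card_range, Finset.sum_range_succ', hu0]
    have hIcc : Finset.Icc 1 N = Finset.Ico 1 (N + 1) := by
      rw [Finset.Ico_add_one_right_eq_Icc]
    rw [hIcc, Finset.sum_Ico_eq_sum_range]
    simp only [Nat.add_sub_cancel]
    have hterm2 : ∀ j ∈ Finset.range N, (-1:ℝ) ^ (1 + j + 1) * u (1 + j)
        = -((-1:ℝ) ^ (j + 1) * u (j + 1)) := by
      intro j _
      rw [add_comm 1 j, pow_succ]
      ring
    rw [Finset.sum_congr rfl hterm2, Finset.sum_neg_distrib]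
    ring
  · -- monotonicity
    intro i hi1 hiN
    have hsum1 : ∑ k ∈ Finset.range N, x k ≤ 1 := by
      have hb : ∀ k ∈ Finset.range N, x k ≤ q ^ N / q ^ s := by
        intro k hk
        simp only [hx]
        gcongr
        exact (Finset.mem_range.mp hk).le
      calc ∑ k ∈ Finset.range N, x k ≤ (Finset.range N).card • (q ^ N / q ^ s) :=
            Finset.sum_le_card_nsmul _ _ _ hb
        _ = (N : ℝ) * (q ^ N / q ^ s) := by rw [Finset.card_range, nsmul_eq_mul]
        _ ≤ 1 := hcond
    rw [hux, hux]
    classical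
    set g : Finset ℕ → Finset ℕ := fun S => S.erase (S.sup id) with hg
    have hmaps : ∀ S ∈ (Finset.range N).powersetCard (i + 1),
        g S ∈ (Finset.range N).powersetCard i := by
      intro S hS
      obtain ⟨hsub, hcard⟩ := Finset.mem_powersetCard.mp hS
      have hne : S.Nonempty := Finset.card_pos.mp (by omega)
      refine Finset.mem_powersetCard.mpr ⟨(Finset.erase_subset _ _).trans hsub, ?_⟩
      rw [Finset.card_erase_of_mem (hsupmem S hne), hcard]
      omega
    rw [← Finset.sum_fiberwise_of_maps_to hmaps (fun S => ∏ k ∈ S, x k)]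
    refine Finset.sum_le_sum fun T hT => ?_
    have hTnn : 0 ≤ ∏ k ∈ T, x k := Finset.prod_nonneg fun k _ => hxnn k
    have hfib : ∀ S ∈ Finset.filter (fun S => g S = T)
        ((Finset.range N).powersetCard (i + 1)),
        (∏ k ∈ S, x k) = x (S.sup id) * ∏ k ∈ T, x k := by
      intro S hS
      obtain ⟨hS', hgS⟩ := Finset.mem_filter.mp hS
      obtain ⟨hsub, hcard⟩ := Finset.mem_powersetCard.mp hS'
      have hne : S.Nonempty := Finset.card_pos.mp (by omega)
      rw [← hgS]
      simp only [hg]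
      exact (Finset.mul_prod_erase S x (hsupmem S hne)).symm
    rw [Finset.sum_congr rfl hfib, ← Finset.sum_mul]
    have hrec : ∀ S ∈ Finset.filter (fun S => g S = T)
        ((Finset.range N).powersetCard (i + 1)), S = insert (S.sup id) T := by
      intro S hS
      obtain ⟨hS', hgS⟩ := Finset.mem_filter.mp hS
      have hne : S.Nonempty := Finset.card_pos.mp (by
        have := (Finset.mem_powersetCard.mp hS').2; omega)
      rw [← hgS]
      simp only [hg]
      exact (Finset.insert_erase (hsupmem S hne)).symm
    have hinj : ∀ S₁ ∈ Finset.filter (fun S => g S = T)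
        ((Finset.range N).powersetCard (i + 1)),
        ∀ S₂ ∈ Finset.filter (fun S => g S = T)
        ((Finset.range N).powersetCard (i + 1)),
        S₁.sup id = S₂.sup id → S₁ = S₂ := by
      intro S₁ h₁ S₂ h₂ heq
      rw [hrec S₁ h₁, hrec S₂ h₂, heq]
    have hbound : (∑ S ∈ Finset.filter (fun S => g S = T)
        ((Finset.range N).powersetCard (i + 1)), x (S.sup id)) ≤ 1 := by
      rw [← Finset.sum_image hinj]
      refine le_trans (Finset.sum_le_sum_of_subset_of_nonneg ?_ fun k _ _ => hxnn k) hsum1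
      intro k hk
      obtain ⟨S, hS, hSk⟩ := Finset.mem_image.mp hk
      obtain ⟨hS', _⟩ := Finset.mem_filter.mp hS
      obtain ⟨hsub, hcard⟩ := Finset.mem_powersetCard.mp hS'
      have hne : S.Nonempty := Finset.card_pos.mp (by omega)
      exact hSk ▸ hsub (hsupmem S hne)
    calc (∑ S ∈ Finset.filter (fun S => g S = T)
          ((Finset.range N).powersetCard (i + 1)), x (S.sup id)) * ∏ k ∈ T, x k
        ≤ 1 * ∏ k ∈ T, x k := mul_le_mul_of_nonneg_right hbound hTnn
      _ = ∏ k ∈ T, x k := one_mul _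
end
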